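/- Let n ≥ 1 and let Q_n(8,4) be the Möbius octagonal-quadrilateral network: the simple graph on the 8n vertices u_1,…,u_{4n}, v_1,…,v_{4n} whose edges are u_i u_{i+1} and v_i v_{i+1} for 1 ≤ i ≤ 4n−1, u_i v_i for every i ≡ 0 or 1 (mod 4), and the two twisted edges u_1 v_{4n} and v_1 u_{4n}. Then the characteristic polynomial of the Laplacian matrix of Q_n(8,4) factors as the product of the characteristic polynomial of the Laplacian matrix of the cycle C_{4n} and the characteristic polynomial of the 4n×4n matrix L_S(n) (the symmetric matrix with diagonal entries 4 at positions j ≡ 0 or 1 (mod 4) and 2 at positions j ≡ 2 or 3 (mod 4), entries −1 on the sub- and super-diagonal, corner entries +1, all other entries 0). -/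

import Mathlib

/-- Underlying relation of the Möbius octagonal-quadrilateral network `Q_n(8,4)`:
`Sum.inl i` is the vertex `u_{i+1}`, `Sum.inr i` is the vertex `v_{i+1}`. -/
def mobiusRel (n : ℕ) : (Fin (4 * n) ⊕ Fin (4 * n)) → (Fin (4 * n) ⊕ Fin (4 * n)) → Prop
  | Sum.inl i, Sum.inl j => i.val + 1 = j.val
  | Sum.inr i, Sum.inr j => i.val + 1 = j.val
  | Sum.inl i, Sum.inr j =>
      (i = j ∧ ((i.val + 1) % 4 = 0 ∨ (i.val + 1) % 4 = 1)) ∨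
      (i.val = 0 ∧ j.val = 4 * n - 1) ∨ (i.val = 4 * n - 1 ∧ j.val = 0)
  | Sum.inr _, Sum.inl _ => False

instance (n : ℕ) : DecidableRel (mobiusRel n) := fun a b => by
  rcases a with i | i <;> rcases b with j | j <;> simp only [mobiusRel] <;> infer_instance

/-- The Möbius octagonal-quadrilateral network `Q_n(8,4)`. -/
def mobius (n : ℕ) : SimpleGraph (Fin (4 * n) ⊕ Fin (4 * n)) :=
  SimpleGraph.fromRel (mobiusRel n)

instance (n : ℕ) : DecidableRel (mobius n).Adj := fun a b =>
  decidable_of_iff (a ≠ b ∧ (mobiusRel n a b ∨ mobiusRel n b a)) Iff.rfl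

/-- The matrix `L_S(n)`: 4n×4n, diagonal entries 4 at (1-indexed) positions ≡ 0,1 (mod 4)
and 2 at positions ≡ 2,3 (mod 4), −1 on the sub/super-diagonal, +1 in the corners. -/
def LS (n : ℕ) : Matrix (Fin (4 * n)) (Fin (4 * n)) ℝ :=
  Matrix.of fun i j =>
    if i.val = j.val then
      (if (i.val + 1) % 4 = 0 ∨ (i.val + 1) % 4 = 1 then 4 else 2)
    else if i.val + 1 = j.val ∨ j.val + 1 = i.val then -1
    else if (i.val = 0 ∧ j.val = 4 * n - 1) ∨ (j.val = 0 ∧ i.val = 4 * n - 1) then 1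
    else 0

lemma lap_apply {V : Type*} [Fintype V] [DecidableEq V] (G : SimpleGraph V) [DecidableRel G.Adj]
    (a b : V) : G.lapMatrix ℝ a b
      = (if a = b then (G.degree a : ℝ) else 0) - (if G.Adj a b then 1 else 0) := by
  simp [SimpleGraph.lapMatrix, SimpleGraph.degMatrix, Matrix.sub_apply, Matrix.diagonal_apply]

lemma mod_helper (N a b : ℕ) (hN : 2 ≤ N) (ha : a < N) (hb : b < N) :
    (N - b + a) % N = 1 ↔ (a = b + 1 ∨ (b = N - 1 ∧ a = 0)) := by
  rcases Nat.lt_or_ge (N - b + a) N with h | h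
  · rw [Nat.mod_eq_of_lt h]; omega
  · rw [Nat.mod_eq_sub_mod h, Nat.mod_eq_of_lt (show N - b + a - N < N by omega)]
    omega

lemma cyc_adj (N : ℕ) (hN : 3 ≤ N) (i j : Fin N) :
    (SimpleGraph.cycleGraph N).Adj i j ↔
      (i.val + 1 = j.val ∨ j.val + 1 = i.val) ∨
        (i.val = 0 ∧ j.val = N - 1) ∨ (j.val = 0 ∧ i.val = N - 1) := by
  obtain ⟨m, rfl⟩ : ∃ m, N = m + 3 := ⟨N - 3, by omega⟩
  rw [SimpleGraph.cycleGraph_adj']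
  rw [Fin.sub_def, Fin.sub_def]
  simp only []
  rw [mod_helper _ _ _ (by omega) i.isLt j.isLt, mod_helper _ _ _ (by omega) j.isLt i.isLt]
  omega

lemma cyc_lap_apply (N : ℕ) (hN : 3 ≤ N) (i j : Fin N) :
    (SimpleGraph.cycleGraph N).lapMatrix ℝ i j =
      if i = j then 2
      else if (i.val + 1 = j.val ∨ j.val + 1 = i.val) ∨
          (i.val = 0 ∧ j.val = N - 1) ∨ (j.val = 0 ∧ i.val = N - 1) then -1 else 0 := by
  rw [lap_apply]
  simp only [cyc_adj N hN]
  by_cases h : i = j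
  · subst h
    have hd : (SimpleGraph.cycleGraph N).degree i = 2 := by
      obtain ⟨m, rfl⟩ : ∃ m, N = m + 3 := ⟨N - 3, by omega⟩
      exact SimpleGraph.cycleGraph_degree_three_le
    rw [if_pos rfl, if_pos rfl, hd]
    have : ¬((i.val + 1 = i.val ∨ i.val + 1 = i.val) ∨
        (i.val = 0 ∧ i.val = N - 1) ∨ (i.val = 0 ∧ i.val = N - 1)) := by
      have := i.isLt; omega
    rw [if_neg this]; norm_num
  · rw [if_neg h, if_neg h]
    split_ifs <;> norm_num

lemma adj_ll (n : ℕ) (i j : Fin (4 * n)) :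
    (mobius n).Adj (Sum.inl i) (Sum.inl j) ↔ (i.val + 1 = j.val ∨ j.val + 1 = i.val) := by
  rw [mobius, SimpleGraph.fromRel_adj]
  simp only [mobiusRel, ne_eq, Sum.inl.injEq, Fin.ext_iff]
  omega

lemma adj_rr (n : ℕ) (i j : Fin (4 * n)) :
    (mobius n).Adj (Sum.inr i) (Sum.inr j) ↔ (i.val + 1 = j.val ∨ j.val + 1 = i.val) := by
  rw [mobius, SimpleGraph.fromRel_adj]
  simp only [mobiusRel, ne_eq, Sum.inr.injEq, Fin.ext_iff]
  omega

lemma adj_lr (n : ℕ) (i j : Fin (4 * n)) :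
    (mobius n).Adj (Sum.inl i) (Sum.inr j) ↔
      ((i.val = j.val ∧ ((i.val + 1) % 4 = 0 ∨ (i.val + 1) % 4 = 1)) ∨
        (i.val = 0 ∧ j.val = 4 * n - 1) ∨ (i.val = 4 * n - 1 ∧ j.val = 0)) := by
  rw [mobius, SimpleGraph.fromRel_adj]
  simp only [mobiusRel, ne_eq, Fin.ext_iff, or_false]
  simp only [show (Sum.inl i : Fin (4*n) ⊕ Fin (4*n)) ≠ Sum.inr j from Sum.inl_ne_inr,
    not_false_iff, true_and]

lemma adj_rl (n : ℕ) (i j : Fin (4 * n)) :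
    (mobius n).Adj (Sum.inr i) (Sum.inl j) ↔
      ((j.val = i.val ∧ ((j.val + 1) % 4 = 0 ∨ (j.val + 1) % 4 = 1)) ∨
        (j.val = 0 ∧ i.val = 4 * n - 1) ∨ (j.val = 4 * n - 1 ∧ i.val = 0)) := by
  rw [mobius, SimpleGraph.fromRel_adj]
  simp only [mobiusRel, ne_eq, Fin.ext_iff, false_or]
  simp only [show (Sum.inr i : Fin (4*n) ⊕ Fin (4*n)) ≠ Sum.inl j from Sum.inr_ne_inl,
    not_false_iff, true_and]

lemma sum_ind (m k : ℕ) : (∑ j : Fin m, if j.val = k then (1:ℝ) else 0) = if k < m then 1 else 0 := by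
  split_ifs with h
  · rw [Finset.sum_eq_single (⟨k, h⟩ : Fin m)]
    · simp
    · intro b _ hb
      exact if_neg (by simpa [Fin.ext_iff] using hb)
    · intro habs; exact absurd (Finset.mem_univ _) habs
  · exact Finset.sum_eq_zero fun j _ => if_neg (by have := j.isLt; omega)

lemma deg_to_sum {V : Type*} [Fintype V] [DecidableEq V] (G : SimpleGraph V)
    [DecidableRel G.Adj] (v : V) :
    ((G.degree v : ℝ)) = ∑ w, (if G.Adj v w then (1:ℝ) else 0) := by
  rw [Finset.sum_boole, SimpleGraph.degree, SimpleGraph.neighborFinset_eq_filter]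

lemma deg_inl (n : ℕ) (hn : 1 ≤ n) (i : Fin (4 * n)) :
    ((mobius n).degree (Sum.inl i) : ℝ)
      = if (i.val + 1) % 4 = 0 ∨ (i.val + 1) % 4 = 1 then 3 else 2 := by
  have h4 : 4 ≤ 4 * n := by omega
  rw [deg_to_sum, Fintype.sum_sum_type]
  have hpath : (∑ j : Fin (4*n), if (mobius n).Adj (Sum.inl i) (Sum.inl j) then (1:ℝ) else 0)
      = (if i.val + 1 < 4*n then 1 else 0) + (if i.val ≥ 1 then 1 else 0) := by
    have step : ∀ j : Fin (4*n), (if (mobius n).Adj (Sum.inl i) (Sum.inl j) then (1:ℝ) else 0)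
        = (if j.val = i.val + 1 then 1 else 0)
          + (if 1 ≤ i.val then (if j.val = i.val - 1 then (1:ℝ) else 0) else 0) := by
      intro j
      simp only [adj_ll]
      have hj := j.isLt
      split_ifs
      all_goals try norm_num
      all_goals (exfalso; omega)
    rw [Finset.sum_congr rfl fun j _ => step j, Finset.sum_add_distrib, sum_ind]
    congr 1
    by_cases h1 : 1 ≤ i.val
    · simp only [if_pos h1, sum_ind]
      have hi := i.isLt
      rw [if_pos (by omega)]
    · simp [if_neg h1]
  have hcross : (∑ j : Fin (4*n), if (mobius n).Adj (Sum.inl i) (Sum.inr j) then (1:ℝ) else 0)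
      = (if (i.val + 1) % 4 = 0 ∨ (i.val + 1) % 4 = 1 then 1 else 0)
        + (if i.val = 0 then 1 else 0) + (if i.val = 4*n - 1 then 1 else 0) := by
    have step : ∀ j : Fin (4*n), (if (mobius n).Adj (Sum.inl i) (Sum.inr j) then (1:ℝ) else 0)
        = (if (i.val + 1) % 4 = 0 ∨ (i.val + 1) % 4 = 1 then
             (if j.val = i.val then (1:ℝ) else 0) else 0)
          + (if i.val = 0 then (if j.val = 4*n - 1 then (1:ℝ) else 0) else 0)
          + (if i.val = 4*n - 1 then (if j.val = 0 then (1:ℝ) else 0) else 0) := by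
      intro j
      simp only [adj_lr]
      have hj := j.isLt
      split_ifs
      all_goals try norm_num
      all_goals (exfalso; omega)
    rw [Finset.sum_congr rfl fun j _ => step j, Finset.sum_add_distrib, Finset.sum_add_distrib]
    have hi := i.isLt
    congr 1
    · congr 1
      · by_cases hc : (i.val + 1) % 4 = 0 ∨ (i.val + 1) % 4 = 1
        · simp only [hc, if_true, sum_ind]; rw [if_pos (by omega)]
        · simp only [hc, if_false, Finset.sum_const, smul_zero]
      · by_cases hc : i.val = 0
        · simp only [hc, if_true, sum_ind]; rw [if_pos (by omega)]
        · simp only [hc, if_false, Finset.sum_const, smul_zero]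
    · by_cases hc : i.val = 4*n - 1
      · simp only [hc, if_true, sum_ind]; rw [if_pos (by omega)]
      · simp only [hc, if_false, Finset.sum_const, smul_zero]
  rw [hpath, hcross]
  have hi := i.isLt
  split_ifs
  all_goals try norm_num
  all_goals (exfalso; omega)

lemma adj_swap (n : ℕ) (a b : Fin (4*n) ⊕ Fin (4*n)) :
    (mobius n).Adj a.swap b.swap ↔ (mobius n).Adj a b := by
  rcases a with x | x <;> rcases b with y | y <;>
    simp only [Sum.swap_inl, Sum.swap_inr, adj_ll, adj_rr, adj_lr, adj_rl] <;> omega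

lemma deg_inr (n : ℕ) (i : Fin (4 * n)) :
    (mobius n).degree (Sum.inr i) = (mobius n).degree (Sum.inl i) := by
  have : (mobius n).neighborFinset (Sum.inr i)
      = ((mobius n).neighborFinset (Sum.inl i)).map
          (Equiv.sumComm (Fin (4*n)) (Fin (4*n))).toEmbedding := by
    ext w
    rw [Finset.mem_map_equiv]
    simp only [SimpleGraph.mem_neighborFinset]
    have h1 : (Equiv.sumComm (Fin (4*n)) (Fin (4*n))).symm w = w.swap := by
      rcases w with z | z <;> rfl
    rw [h1]
    have := adj_swap n (Sum.inl i) w.swap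
    rw [Sum.swap_swap] at this
    rw [← this]
    rfl
  rw [SimpleGraph.degree, SimpleGraph.degree, this, Finset.card_map]

def Amat (n : ℕ) : Matrix (Fin (4*n)) (Fin (4*n)) ℝ :=
  Matrix.of fun i j =>
    if i = j then (if (i.val + 1) % 4 = 0 ∨ (i.val + 1) % 4 = 1 then 3 else 2)
    else if i.val + 1 = j.val ∨ j.val + 1 = i.val then -1 else 0

def Bmat (n : ℕ) : Matrix (Fin (4*n)) (Fin (4*n)) ℝ :=
  Matrix.of fun i j =>
    if (i.val = j.val ∧ ((i.val + 1) % 4 = 0 ∨ (i.val + 1) % 4 = 1))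
        ∨ (i.val = 0 ∧ j.val = 4*n - 1) ∨ (i.val = 4*n - 1 ∧ j.val = 0) then -1 else 0

lemma lap_blocks (n : ℕ) (hn : 1 ≤ n) :
    (mobius n).lapMatrix ℝ = Matrix.fromBlocks (Amat n) (Bmat n) (Bmat n) (Amat n) := by
  have h4 : 4 ≤ 4 * n := by omega
  ext a b
  rcases a with i | i <;> rcases b with j | j
  · rw [lap_apply]
    simp only [Matrix.fromBlocks_apply₁₁, Amat, Matrix.of_apply, Sum.inl.injEq]
    by_cases hij : i = j
    · subst hij
      rw [if_pos rfl, if_pos rfl, deg_inl n hn i,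
        if_neg (show ¬ (mobius n).Adj (Sum.inl i) (Sum.inl i) by rw [adj_ll]; omega)]
      norm_num
    · rw [if_neg hij, if_neg hij]
      simp only [adj_ll]
      have hv : i.val ≠ j.val := fun h => hij (Fin.ext h)
      split_ifs
      all_goals try norm_num
      all_goals (exfalso; omega)
  · rw [lap_apply]
    simp only [Matrix.fromBlocks_apply₁₂, Bmat, Matrix.of_apply, adj_lr]
    rw [if_neg (by simp)]
    split_ifs
    all_goals try norm_num
    all_goals (exfalso; omega)
  · rw [lap_apply]
    simp only [Matrix.fromBlocks_apply₂₁, Bmat, Matrix.of_apply, adj_rl]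
    rw [if_neg (by simp)]
    split_ifs
    all_goals try norm_num
    all_goals (exfalso; omega)
  · rw [lap_apply]
    simp only [Matrix.fromBlocks_apply₂₂, Amat, Matrix.of_apply, Sum.inr.injEq]
    by_cases hij : i = j
    · subst hij
      rw [if_pos rfl, if_pos rfl, deg_inr, deg_inl n hn i,
        if_neg (show ¬ (mobius n).Adj (Sum.inr i) (Sum.inr i) by rw [adj_rr]; omega)]
      norm_num
    · rw [if_neg hij, if_neg hij]
      simp only [adj_rr]
      have hv : i.val ≠ j.val := fun h => hij (Fin.ext h)
      split_ifs
      all_goals try norm_num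
      all_goals (exfalso; omega)

open Matrix Polynomial in
lemma charpoly_blocks {m : Type*} [Fintype m] [DecidableEq m] (A B : Matrix m m ℝ) :
    (Matrix.fromBlocks A B B A).charpoly = (A + B).charpoly * (A - B).charpoly := by
  classical
  set cA := charmatrix A with hcA
  set cB := B.map (C : ℝ →+* ℝ[X]) with hcB
  have hplus : charmatrix (A + B) = cA - cB := by
    ext i j
    simp [hcA, hcB, charmatrix_apply, Matrix.sub_apply, Matrix.map_apply, Matrix.add_apply]
    ring
  have hminus : charmatrix (A - B) = cA + cB := by
    ext i j
    simp [hcA, hcB, charmatrix_apply, Matrix.add_apply, Matrix.map_apply, Matrix.sub_apply]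
    ring
  have key : Matrix.fromBlocks 1 1 0 1 * charmatrix (Matrix.fromBlocks A B B A)
        * Matrix.fromBlocks 1 (-1) 0 1
      = Matrix.fromBlocks (cA - cB) 0 (-cB) (cA + cB) := by
    rw [charmatrix_fromBlocks, Matrix.fromBlocks_multiply, Matrix.fromBlocks_multiply]
    simp only [Matrix.one_mul, Matrix.mul_one, Matrix.zero_mul, Matrix.mul_zero,
      Matrix.mul_neg, Matrix.neg_mul]
    simp only [add_zero, zero_add]
    congr 1 <;> abel
  have hdet : (charmatrix (Matrix.fromBlocks A B B A)).det
      = (cA - cB).det * (cA + cB).det := by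
    have h1 : ((Matrix.fromBlocks 1 1 0 1 : Matrix (m ⊕ m) (m ⊕ m) ℝ[X])).det = 1 := by
      rw [Matrix.det_fromBlocks_zero₂₁]; simp
    have h2 : ((Matrix.fromBlocks 1 (-1) 0 1 : Matrix (m ⊕ m) (m ⊕ m) ℝ[X])).det = 1 := by
      rw [Matrix.det_fromBlocks_zero₂₁]; simp
    calc (charmatrix (Matrix.fromBlocks A B B A)).det
        = (Matrix.fromBlocks 1 1 0 1 * charmatrix (Matrix.fromBlocks A B B A)
            * Matrix.fromBlocks 1 (-1) 0 1).det := by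
          rw [Matrix.det_mul, Matrix.det_mul, h1, h2, one_mul, mul_one]
      _ = (Matrix.fromBlocks (cA - cB) 0 (-cB) (cA + cB)).det := by rw [key]
      _ = (cA - cB).det * (cA + cB).det := Matrix.det_fromBlocks_zero₁₂ _ _ _
  simp only [Matrix.charpoly, hdet, hplus, hminus]


lemma sum_eq_cyc (n : ℕ) (hn : 1 ≤ n) :
    Amat n + Bmat n = (SimpleGraph.cycleGraph (4 * n)).lapMatrix ℝ := by
  have h4 : 4 ≤ 4 * n := by omega
  ext i j
  rw [Matrix.add_apply, cyc_lap_apply (4*n) (by omega) i j]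
  simp only [Amat, Bmat, Matrix.of_apply, Fin.ext_iff]
  have hi := i.isLt
  have hj := j.isLt
  split_ifs
  all_goals try norm_num
  all_goals (exfalso; omega)

lemma diff_eq_LS (n : ℕ) (hn : 1 ≤ n) : Amat n - Bmat n = LS n := by
  have h4 : 4 ≤ 4 * n := by omega
  ext i j
  rw [Matrix.sub_apply]
  simp only [Amat, Bmat, LS, Matrix.of_apply, Fin.ext_iff]
  have hi := i.isLt
  have hj := j.isLt
  split_ifs
  all_goals try norm_num
  all_goals (exfalso; omega)


theorem stmt_10 (n : ℕ) (hn : 1 ≤ n) :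
    ((mobius n).lapMatrix ℝ).charpoly
      = ((SimpleGraph.cycleGraph (4 * n)).lapMatrix ℝ).charpoly * (LS n).charpoly := by
  rw [lap_blocks n hn, charpoly_blocks, sum_eq_cyc n hn, diff_eq_LS n hn]
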